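/- Let p ∈ (0,1) be constant. There exists ε₀ > 0 such that for every ε ∈ (0, ε₀) and every constant C > 0 with 1/C + 2ε·ln(1/ε) < (1/2)·ln(1/(1−p)), the following holds: for every sequence t(k) of non-negative integers with t(k) < ε·k² for all sufficiently large k, asymptotically almost surely G(n,p) contains no vertex subset of size k ≥ C·ln n whose induced subgraph has exactly t(k) edges. -/

import Mathlib

open MeasureTheory Finset

open scoped ENNReal

/-- The binomial random graph `G(n,p)`, modeled as the product of Bernoulli(p) measures
on the indicators of the potential edges. -/
noncomputable def erdosRenyi (n : ℕ) {p : ℝ} (hp₀ : 0 ≤ p) (hp₁ : p ≤ 1) :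
    Measure (Sym2 (Fin n) → Bool) :=
  Measure.pi fun _ =>
    (PMF.bernoulli (Real.toNNReal p) (Real.toNNReal_le_one.mpr hp₁)).toMeasure

/-- The graph determined by a sample of edge indicators. -/
def graphOf {n : ℕ} (x : Sym2 (Fin n) → Bool) : SimpleGraph (Fin n) where
  Adj i j := i ≠ j ∧ x s(i, j) = true
  symm := ⟨fun i j ⟨hne, hx⟩ => ⟨hne.symm, by rwa [Sym2.eq_swap]⟩⟩
  loopless := ⟨fun i ⟨hne, _⟩ => hne rfl⟩

/-- The number of edges of the subgraph of `G` induced on the vertex subset `S`. -/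
noncomputable def inducedEdgeCount {n : ℕ} (G : SimpleGraph (Fin n)) (S : Finset (Fin n)) : ℕ :=
  ((G.induce (↑S : Set (Fin n))).edgeSet).ncard

section AuxLemmas

noncomputable def edgesOf {n : ℕ} (S : Finset (Fin n)) : Finset (Sym2 (Fin n)) :=
  S.sym2.filter (fun e => ¬ e.IsDiag)

theorem edgesOf_card {n : ℕ} (S : Finset (Fin n)) : (edgesOf S).card = S.card.choose 2 := by
  classical
  have h1 : S.sym2.filter (fun e => e.IsDiag) = S.image Sym2.diag := by
    ext e
    induction e using Sym2.ind with
    | _ a b =>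
      simp only [mem_filter, Finset.mk_mem_sym2_iff, mem_image]
      constructor
      · rintro ⟨⟨ha, _⟩, hd⟩
        rw [Sym2.mk_isDiag_iff] at hd
        subst hd
        exact ⟨a, ha, rfl⟩
      · rintro ⟨c, hc, hce⟩
        have h2 : Sym2.diag c = s(c, c) := rfl
        rw [h2] at hce
        obtain ⟨rfl, rfl⟩ | ⟨rfl, rfl⟩ := Sym2.eq_iff.mp hce <;>
          exact ⟨⟨hc, hc⟩, rfl⟩
  have h2 : (S.image Sym2.diag).card = S.card :=
    Finset.card_image_of_injective _ Sym2.diag_injective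
  have h3 : (edgesOf S).card = S.sym2.card - S.card := by
    rw [edgesOf, Finset.filter_not, Finset.card_sdiff_of_subset (Finset.filter_subset _ _), h1, h2]
  rw [h3, Finset.card_sym2, Nat.choose_two_right, Nat.choose_two_right]
  rcases Nat.eq_zero_or_pos S.card with h | h
  · simp [h]
  · obtain ⟨m, hm⟩ := Nat.exists_eq_add_of_le h
    rw [hm]
    have e1 : (1 + m + 1) * (1 + m + 1 - 1) = (m * (m+1) + 2 * (m + 1)) := by
      have : 1 + m + 1 - 1 = 1 + m := by omega
      rw [this]; ring
    have e2 : (1 + m) * (1 + m - 1) = m * (m + 1) := by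
      have : 1 + m - 1 = m := by omega
      rw [this]; ring
    rw [e1, e2, Nat.add_mul_div_left _ _ (by norm_num : (0:ℕ) < 2)]
    omega

theorem inducedEdgeCount_eq {n : ℕ} (x : Sym2 (Fin n) → Bool) (S : Finset (Fin n)) :
    inducedEdgeCount (graphOf x) S
      = ((edgesOf S).filter (fun e => x e = true)).card := by
  classical
  have hinj : Function.Injective (Sym2.map (Subtype.val : (↑(S : Set (Fin n))) → Fin n)) :=
    Sym2.map.injective Subtype.val_injective
  have himg : (Sym2.map (Subtype.val : (↑(S : Set (Fin n))) → Fin n)) ''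
        ((graphOf x).induce (↑S : Set (Fin n))).edgeSet
      = ↑((edgesOf S).filter (fun e => x e = true)) := by
    ext e
    induction e using Sym2.ind with
    | _ a b =>
      simp only [Set.mem_image, coe_filter, Set.mem_setOf_eq, mem_coe]
      constructor
      · rintro ⟨e', he', heq⟩
        induction e' using Sym2.ind with
        | _ u v =>
          rw [SimpleGraph.mem_edgeSet] at he'
          obtain ⟨hne, hx⟩ := he'
          have : s((u:Fin n), (v:Fin n)) = s(a, b) := heq
          refine ⟨?_, ?_⟩
          · rw [← this]
            refine Finset.mem_filter.mpr ⟨Finset.mk_mem_sym2_iff.mpr ⟨u.2, v.2⟩, ?_⟩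
            simp only [Sym2.mk_isDiag_iff]
            intro h
            exact hne (by simpa using Subtype.ext h)
          · rw [← this]; exact hx
      · rintro ⟨hmem, hx⟩
        simp only [edgesOf, Finset.mem_filter, Finset.mk_mem_sym2_iff] at hmem
        obtain ⟨⟨ha, hb⟩, hd⟩ := hmem
        refine ⟨s((⟨a, ha⟩ : ↑(S:Set (Fin n))), (⟨b, hb⟩ : ↑(S:Set (Fin n)))), ?_, rfl⟩
        rw [SimpleGraph.mem_edgeSet]
        refine ⟨fun h => ?_, hx⟩
        apply hd
        simp only [Sym2.mk_isDiag_iff]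
        simpa using h
  rw [inducedEdgeCount, ← Set.ncard_image_of_injective _ hinj, himg, Set.ncard_coe_finset]

theorem prob_count_eq_le {n : ℕ} {p : ℝ} (hp₀ : 0 ≤ p) (hp₁ : p ≤ 1)
    (ES : Finset (Sym2 (Fin n))) (t' : ℕ) :
    erdosRenyi n hp₀ hp₁ {x | (ES.filter (fun e => x e = true)).card = t'}
      ≤ (ES.card.choose t') * (ENNReal.ofReal (1 - p)) ^ (ES.card - t') := by
  classical
  set ν := (PMF.bernoulli (Real.toNNReal p)
      (Real.toNNReal_le_one.mpr hp₁)).toMeasure with hν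
  have hνsing : ∀ b : Bool, ν {b} = if b then ENNReal.ofReal p else ENNReal.ofReal (1 - p) := by
    intro b
    rw [hν, PMF.toMeasure_apply_singleton _ _ (measurableSet_singleton b)]
    cases b with
    | true => simp [PMF.bernoulli_apply]; rfl
    | false =>
      simp only [PMF.bernoulli_apply, Bool.cond_false, Bool.false_eq_true, if_false]
      rw [ENNReal.ofReal_sub _ hp₀, ENNReal.ofReal_one, ENNReal.coe_sub, ENNReal.coe_one]; rfl
  -- cylinder sets
  have hcyl : ∀ A : Finset (Sym2 (Fin n)), A ⊆ ES →
      erdosRenyi n hp₀ hp₁ {x | ∀ e ∈ ES, x e = decide (e ∈ A)}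
        ≤ (ENNReal.ofReal (1 - p)) ^ (ES.card - A.card) := by
    intro A hA
    have hset : {x : Sym2 (Fin n) → Bool | ∀ e ∈ ES, x e = decide (e ∈ A)}
        = Set.pi Set.univ (fun e => if e ∈ ES then {decide (e ∈ A)} else Set.univ) := by
      ext x
      simp only [Set.mem_setOf_eq, Set.mem_pi, Set.mem_univ, forall_true_left]
      constructor
      · intro h e
        by_cases he : e ∈ ES <;> simp [he, h]
      · intro h e he
        have := h e
        simpa [he] using this
    rw [erdosRenyi, hset, Measure.pi_pi]
    have hprod : ∀ e : Sym2 (Fin n),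
        ν (if e ∈ ES then ({decide (e ∈ A)} : Set Bool) else Set.univ)
          = if e ∈ ES then (if e ∈ A then ENNReal.ofReal p else ENNReal.ofReal (1 - p)) else 1 := by
      intro e
      by_cases he : e ∈ ES
      · simp only [he, if_true, hνsing]
        by_cases heA : e ∈ A <;> simp [heA]
      · simp only [he, if_false]
        exact measure_univ
    calc ∏ e, ν (if e ∈ ES then ({decide (e ∈ A)} : Set Bool) else Set.univ)
        = ∏ e, (if e ∈ ES then (if e ∈ A then ENNReal.ofReal p else ENNReal.ofReal (1 - p)) else 1) := by
          exact Finset.prod_congr rfl (fun e _ => hprod e)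
      _ = ∏ e ∈ ES, (if e ∈ A then ENNReal.ofReal p else ENNReal.ofReal (1 - p)) := by
          rw [← Finset.prod_subset (Finset.subset_univ ES)]
          · exact Finset.prod_congr rfl (fun e he => by simp [he])
          · intro e _ he; simp [he]
      _ ≤ ∏ e ∈ ES, (if e ∈ A then 1 else ENNReal.ofReal (1 - p)) := by
          refine Finset.prod_le_prod' fun e _ => ?_
          by_cases heA : e ∈ A <;> simp [heA, ENNReal.ofReal_le_one, hp₁]
      _ = (ENNReal.ofReal (1 - p)) ^ (ES \ A).card := by
          rw [← Finset.prod_filter_mul_prod_filter_not ES (fun e => e ∈ A)]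
          have h1 : (∏ e ∈ ES.filter (fun e => e ∈ A), if e ∈ A then (1:ENNReal) else ENNReal.ofReal (1-p)) = 1 := by
            apply Finset.prod_eq_one
            intro e he; simp [(Finset.mem_filter.mp he).2]
          have h2 : (∏ e ∈ ES.filter (fun e => e ∉ A), if e ∈ A then (1:ENNReal) else ENNReal.ofReal (1-p))
              = ENNReal.ofReal (1-p) ^ (ES \ A).card := by
            rw [Finset.sdiff_eq_filter]
            rw [Finset.prod_congr rfl (fun e he => if_neg (Finset.mem_filter.mp he).2), Finset.prod_const]
          rw [h1, h2, one_mul]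
      _ = (ENNReal.ofReal (1 - p)) ^ (ES.card - A.card) := by
          rw [Finset.card_sdiff_of_subset hA]
  -- event inclusion
  have hsub : {x : Sym2 (Fin n) → Bool | (ES.filter (fun e => x e = true)).card = t'}
      ⊆ ⋃ A ∈ ES.powersetCard t', {x | ∀ e ∈ ES, x e = decide (e ∈ A)} := by
    intro x hx
    simp only [Set.mem_setOf_eq] at hx
    refine Set.mem_biUnion (Finset.mem_powersetCard.mpr ⟨Finset.filter_subset _ _, hx⟩) ?_
    intro e he
    by_cases hxe : x e = true
    · simp [Finset.mem_filter, he, hxe]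
    · simp only [Bool.not_eq_true] at hxe
      simp [Finset.mem_filter, hxe]
  calc erdosRenyi n hp₀ hp₁ {x | (ES.filter (fun e => x e = true)).card = t'}
      ≤ erdosRenyi n hp₀ hp₁ (⋃ A ∈ ES.powersetCard t', {x | ∀ e ∈ ES, x e = decide (e ∈ A)}) :=
        measure_mono hsub
    _ ≤ ∑ A ∈ ES.powersetCard t', erdosRenyi n hp₀ hp₁ {x | ∀ e ∈ ES, x e = decide (e ∈ A)} :=
        measure_biUnion_finset_le _ _
    _ ≤ ∑ A ∈ ES.powersetCard t', (ENNReal.ofReal (1 - p)) ^ (ES.card - t') := by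
        refine Finset.sum_le_sum fun A hA => ?_
        obtain ⟨hAs, hAc⟩ := Finset.mem_powersetCard.mp hA
        rw [← hAc]
        exact hcyl A hAs
    _ = (ES.card.choose t') * (ENNReal.ofReal (1 - p)) ^ (ES.card - t') := by
        rw [Finset.sum_const, Finset.card_powersetCard, nsmul_eq_mul]


lemma exponent_bound (L ε C δ x K T : ℝ) (hL0 : 0 < L)
    (hε0 : 0 < ε) (hεL : 2 + L ≤ Real.log (1/ε))
    (hC : 0 < C) (hδ' : 1/C + 2*ε*Real.log (1/ε) = L/2 - δ) (hδ0 : 0 < δ)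
    (hk : 2 ≤ x) (hkδ : L ≤ δ*x) (hK : K = x*(x-1)/2) (hT0 : 0 ≤ T)
    (hTs : T < ε*x^2) (hsK : ε*x^2 ≤ K) :
    x^2/C + (T*(Real.log K - Real.log T) + T) - (K - T)*L ≤ -(δ/2)*x^2 := by
  have hx0 : 0 < x := by linarith
  have hs0 : 0 < ε*x^2 := by positivity
  have hK0 : 0 < K := lt_of_lt_of_le hs0 hsK
  have hlogε : 0 < Real.log (1/ε) := by linarith
  have claim : T * (Real.log K - Real.log T) + T ≤ (ε*x^2) * (2 * Real.log (1/ε) - L) := by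
    rcases eq_or_lt_of_le hT0 with h0 | hT0'
    · rw [← h0]
      have : (0:ℝ) ≤ (ε*x^2) * (2 * Real.log (1/ε) - L) := by
        apply mul_nonneg hs0.le; linarith
      simpa using this
    · have g1 : T * (Real.log (ε*x^2) - Real.log T) ≤ ε*x^2 - T := by
        have hst : (0:ℝ) < (ε*x^2) / T := div_pos hs0 hT0'
        have hlog := Real.log_le_sub_one_of_pos hst
        rw [Real.log_div (ne_of_gt hs0) (ne_of_gt hT0')] at hlog
        have h := mul_le_mul_of_nonneg_left hlog hT0
        calc T * (Real.log (ε*x^2) - Real.log T) ≤ T * ((ε*x^2)/T - 1) := h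
          _ = ε*x^2 - T := by field_simp
      have hlogsK : Real.log (ε*x^2) ≤ Real.log K := Real.log_le_log hs0 hsK
      have g2 : T * (Real.log K - Real.log (ε*x^2) + 1)
          ≤ (ε*x^2) * (Real.log K - Real.log (ε*x^2) + 1) :=
        mul_le_mul_of_nonneg_right (le_of_lt hTs) (by linarith)
      have f2 : Real.log K - Real.log (ε*x^2) ≤ Real.log (1/ε) := by
        have l1 : Real.log K ≤ Real.log (x^2) := by
          apply Real.log_le_log hK0; nlinarith
        have l2 : Real.log (ε*x^2) = Real.log ε + Real.log (x^2) := by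
          rw [Real.log_mul (ne_of_gt hε0) (by positivity)]
        have l3 : Real.log (1/ε) = -Real.log ε := by rw [one_div, Real.log_inv]
        linarith
      have f3 : (ε*x^2) * (Real.log K - Real.log (ε*x^2) + 2)
          ≤ (ε*x^2) * (Real.log (1/ε) + 2) :=
        mul_le_mul_of_nonneg_left (by linarith) hs0.le
      have f4 : (ε*x^2) * (Real.log (1/ε) + 2) ≤ (ε*x^2) * (2 * Real.log (1/ε) - L) :=
        mul_le_mul_of_nonneg_left (by linarith) hs0.le
      nlinarith [g1, g2, f3, f4]
  have q1 : T*L ≤ (ε*x^2)*L := mul_le_mul_of_nonneg_right (le_of_lt hTs) hL0.le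
  have q2 : (1/C + 2*ε*Real.log (1/ε))*x^2 = (L/2 - δ)*x^2 := by rw [hδ']
  have q3 : L*x ≤ δ*x^2 := by nlinarith
  have hKL : K*L = (x*(x-1)/2)*L := by rw [hK]
  have s1 : x^2/C + (T*(Real.log K - Real.log T) + T) - (K - T)*L
      ≤ x^2/C + 2*ε*Real.log (1/ε)*x^2 - K*L := by nlinarith [claim, q1]
  have s2 : x^2/C + 2*ε*Real.log (1/ε)*x^2 = (L/2 - δ)*x^2 := by linear_combination q2
  have s3 : (L/2 - δ)*x^2 - K*L = -δ*x^2 + L*x/2 := by rw [hKL]; ring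
  linarith
-- single term of exp series ≤ exp
lemma pow_div_factorial_le_exp (m : ℕ) (hm : 1 ≤ m) : (m:ℝ)^m / m.factorial ≤ Real.exp m := by
  have h := Real.sum_le_exp_of_nonneg (x := (m:ℝ)) (by positivity) (m+1)
  refine le_trans ?_ h
  have : (m:ℝ)^m / m.factorial = ∑ i ∈ Finset.range (m+1), if i = m then (m:ℝ)^i / i.factorial else 0 := by
    rw [Finset.sum_ite_eq' (Finset.range (m+1)) m]
    simp
  rw [this]
  refine Finset.sum_le_sum fun i _ => ?_
  by_cases h : i = m
  · simp [h]
  · simp only [h, if_false]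
    positivity


lemma key_real (p L ε C δ : ℝ) (hp₀ : 0 < p) (hp₁ : p < 1)
    (hL : L = Real.log (1/(1-p)))
    (hε0 : 0 < ε) (hε1 : ε ≤ 1/4) (hεL : 2 + L ≤ Real.log (1/ε))
    (hC : 0 < C) (hδ : δ = L/2 - (1/C + 2*ε*Real.log (1/ε))) (hδ0 : 0 < δ)
    (n k t' : ℕ) (h2k : 2 ≤ k) (hkn : k ≤ n) (hklog : C * Real.log n ≤ k) (hkδ : L ≤ δ * k)
    (ht : (t' : ℝ) < ε * (k:ℝ)^2) :
    (n.choose k : ℝ) * ((k.choose 2).choose t' : ℝ) * (1-p)^((k.choose 2) - t')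
      ≤ Real.exp (-(δ/2) * (k:ℝ)^2) := by
  have h1p : (0:ℝ) < 1 - p := by linarith
  have hL0 : 0 < L := by
    rw [hL]
    apply Real.log_pos
    rw [lt_div_iff₀ h1p]; linarith
  have hLneg : Real.log (1 - p) = -L := by
    rw [hL, one_div, Real.log_inv, neg_neg]
  have hk0 : (0:ℝ) < k := by positivity
  have hkR : (2:ℝ) ≤ k := by exact_mod_cast h2k
  have hK : ((k.choose 2 : ℕ) : ℝ) = (k:ℝ) * ((k:ℝ) - 1) / 2 := Nat.cast_choose_two (K := ℝ) k
  have hKlb : (k:ℝ)^2/4 ≤ ((k.choose 2 : ℕ) : ℝ) := by rw [hK]; nlinarith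
  have hs0 : 0 < ε * (k:ℝ)^2 := by positivity
  have hsK : ε * (k:ℝ)^2 ≤ ((k.choose 2 : ℕ) : ℝ) := by
    calc ε * (k:ℝ)^2 ≤ (k:ℝ)^2/4 := by nlinarith
      _ ≤ _ := hKlb
  have hK0 : (0:ℝ) < ((k.choose 2 : ℕ) : ℝ) := lt_of_lt_of_le hs0 hsK
  have ht'K : t' ≤ k.choose 2 := by
    have h : (t':ℝ) ≤ ((k.choose 2 : ℕ) : ℝ) := le_of_lt (lt_of_lt_of_le ht hsK)
    exact_mod_cast h
  have hcastsub : ((k.choose 2 - t' : ℕ) : ℝ) = ((k.choose 2 : ℕ) : ℝ) - t' :=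
    Nat.cast_sub ht'K
  -- bound on n.choose k
  have hA : (n.choose k : ℝ) ≤ Real.exp ((k:ℝ)^2/C) := by
    have h1 : (n.choose k : ℝ) ≤ (n:ℝ)^k := by
      exact_mod_cast Nat.choose_le_pow n k
    have hn0 : (0:ℝ) < n := lt_of_lt_of_le (by norm_num) (le_trans hkR (by exact_mod_cast hkn))
    have h2 : (n:ℝ)^k = Real.exp ((k:ℝ) * Real.log n) := by
      rw [← Real.log_pow, Real.exp_log (by positivity)]
    have h3 : Real.log n ≤ (k:ℝ)/C := by
      rw [le_div_iff₀ hC]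
      linarith [hklog]
    refine h1.trans (h2.le.trans (Real.exp_le_exp.mpr ?_))
    calc (k:ℝ) * Real.log n ≤ (k:ℝ) * ((k:ℝ)/C) :=
          mul_le_mul_of_nonneg_left h3 hk0.le
      _ = (k:ℝ)^2/C := by ring
  -- the (1-p) power as an exponential
  have hCpow : (1-p)^((k.choose 2) - t')
      = Real.exp (-(((k.choose 2 : ℕ) : ℝ) - (t':ℝ)) * L) := by
    rw [← Real.exp_log h1p, ← Real.exp_nat_mul, hLneg]
    congr 1
    rw [hcastsub]; ring
  -- choose bound
  have hB : ((k.choose 2).choose t' : ℝ)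
      ≤ Real.exp ((t':ℝ) * (Real.log ((k.choose 2 : ℕ) : ℝ) - Real.log (t':ℝ)) + (t':ℝ)) := by
    rcases Nat.eq_zero_or_pos t' with h0 | h1
    · subst h0
      simp
    · have ht0 : (0:ℝ) < t' := by exact_mod_cast h1
      have b1 : ((k.choose 2).choose t' : ℝ) ≤ ((k.choose 2 : ℕ) : ℝ)^t' / t'.factorial := by
        have h := Nat.choose_le_pow_div (α := ℝ) t' (k.choose 2)
        push_cast at h
        exact h
      have b2 : (t':ℝ)^t' / t'.factorial ≤ Real.exp t' := pow_div_factorial_le_exp t' h1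
      have hfac : (0:ℝ) < t'.factorial := by exact_mod_cast Nat.factorial_pos t'
      have b3 : ((k.choose 2 : ℕ) : ℝ)^t' / t'.factorial
          = (((k.choose 2 : ℕ) : ℝ)/(t':ℝ))^t' * ((t':ℝ)^t' / t'.factorial) := by
        rw [div_pow]
        field_simp
      have b4 : (((k.choose 2 : ℕ) : ℝ)/(t':ℝ))^t'
          = Real.exp ((t':ℝ) * (Real.log ((k.choose 2 : ℕ) : ℝ) - Real.log (t':ℝ))) := by
        rw [← Real.exp_log (div_pos hK0 ht0), ← Real.exp_nat_mul,
          Real.log_div (ne_of_gt hK0) (ne_of_gt ht0)]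
      calc ((k.choose 2).choose t' : ℝ) ≤ ((k.choose 2 : ℕ) : ℝ)^t' / t'.factorial := b1
        _ = (((k.choose 2 : ℕ) : ℝ)/(t':ℝ))^t' * ((t':ℝ)^t' / t'.factorial) := b3
        _ ≤ (((k.choose 2 : ℕ) : ℝ)/(t':ℝ))^t' * Real.exp t' :=
            mul_le_mul_of_nonneg_left b2 (by positivity)
        _ = Real.exp ((t':ℝ) * (Real.log ((k.choose 2 : ℕ) : ℝ) - Real.log (t':ℝ)) + (t':ℝ)) := by
            rw [b4, ← Real.exp_add]
  -- exponent inequality via exponent_bound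
  have hexp := exponent_bound L ε C δ (k:ℝ) ((k.choose 2 : ℕ) : ℝ) (t':ℝ) hL0 hε0 hεL hC
    (by rw [hδ]; ring) hδ0 hkR hkδ hK (Nat.cast_nonneg t') ht hsK
  calc (n.choose k : ℝ) * ((k.choose 2).choose t' : ℝ) * (1-p)^((k.choose 2) - t')
      ≤ Real.exp ((k:ℝ)^2/C)
        * Real.exp ((t':ℝ) * (Real.log ((k.choose 2 : ℕ) : ℝ) - Real.log (t':ℝ)) + (t':ℝ))
        * Real.exp (-(((k.choose 2 : ℕ) : ℝ) - (t':ℝ)) * L) := by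
        rw [hCpow]
        apply mul_le_mul_of_nonneg_right _ (Real.exp_nonneg _)
        exact mul_le_mul hA hB (by positivity) (Real.exp_nonneg _)
    _ = Real.exp ((k:ℝ)^2/C + ((t':ℝ) * (Real.log ((k.choose 2 : ℕ) : ℝ) - Real.log (t':ℝ)) + (t':ℝ))
        - (((k.choose 2 : ℕ) : ℝ) - (t':ℝ)) * L) := by
        rw [← Real.exp_add, ← Real.exp_add]
        congr 1
        ring
    _ ≤ Real.exp (-(δ/2) * (k:ℝ)^2) := Real.exp_le_exp.mpr hexp

lemma measure_bad_le {p : ℝ} (hp₀ : 0 ≤ p) (hp₁ : p ≤ 1) (n : ℕ) (C : ℝ) (t : ℕ → ℕ) :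
    erdosRenyi n hp₀ hp₁ {x | ∃ S : Finset (Fin n),
        C * Real.log n ≤ (S.card : ℝ) ∧ inducedEdgeCount (graphOf x) S = t S.card}
      ≤ ∑ k ∈ Finset.range (n+1), if C * Real.log n ≤ (k:ℝ) then
          ((n.choose k : ℕ) : ℝ≥0∞) * (((k.choose 2).choose (t k) : ℕ) : ℝ≥0∞)
            * (ENNReal.ofReal (1-p))^(k.choose 2 - t k)
        else 0 := by
  classical
  set g : ℕ → ℝ≥0∞ := fun k => (((k.choose 2).choose (t k) : ℕ) : ℝ≥0∞)
      * (ENNReal.ofReal (1-p))^(k.choose 2 - t k) with hg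
  set F : Finset (Finset (Fin n)) :=
    Finset.univ.filter (fun S : Finset (Fin n) => C * Real.log n ≤ (S.card : ℝ)) with hF
  have hsub : {x : Sym2 (Fin n) → Bool | ∃ S : Finset (Fin n),
        C * Real.log n ≤ (S.card : ℝ) ∧ inducedEdgeCount (graphOf x) S = t S.card}
      ⊆ ⋃ S ∈ F, {x | inducedEdgeCount (graphOf x) S = t S.card} := by
    rintro x ⟨S, hS1, hS2⟩
    exact Set.mem_biUnion (show S ∈ F by rw [hF]; exact Finset.mem_filter.mpr ⟨Finset.mem_univ _, hS1⟩) hS2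
  refine le_trans (le_trans (measure_mono hsub) (measure_biUnion_finset_le _ _)) ?_
  have hterm : ∀ S ∈ F,
      erdosRenyi n hp₀ hp₁ {x | inducedEdgeCount (graphOf x) S = t S.card} ≤ g S.card := by
    intro S _
    have hset : {x : Sym2 (Fin n) → Bool | inducedEdgeCount (graphOf x) S = t S.card}
        = {x | ((edgesOf S).filter (fun e => x e = true)).card = t S.card} := by
      ext x; simp [inducedEdgeCount_eq]
    rw [hset, hg]
    have := prob_count_eq_le hp₀ hp₁ (edgesOf S) (t S.card)
    rwa [edgesOf_card] at this
  refine le_trans (Finset.sum_le_sum hterm) ?_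
  -- group by cardinality
  have hmaps : ∀ S ∈ F, S.card ∈ Finset.range (n+1) := by
    intro S _
    simp only [Finset.mem_range]
    have := Finset.card_le_univ S
    simpa [Finset.card_fin] using Nat.lt_succ_of_le (by simpa using this)
  rw [← Finset.sum_fiberwise_of_maps_to hmaps (fun S => g S.card)]
  refine Finset.sum_le_sum fun k hk => ?_
  by_cases hcond : C * Real.log n ≤ (k:ℝ)
  · rw [if_pos hcond]
    have h1 : ∑ S ∈ F.filter (fun S => S.card = k), g S.card
        = (F.filter (fun S => S.card = k)).card • g k := by
      rw [Finset.sum_congr rfl (fun S hS => by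
        rw [(Finset.mem_filter.mp hS).2]), Finset.sum_const]
    rw [h1]
    have h2 : (F.filter (fun S => S.card = k)).card ≤ n.choose k := by
      have hss : F.filter (fun S => S.card = k) ⊆ Finset.univ.powersetCard k := by
        intro S hS
        rw [Finset.mem_powersetCard]
        exact ⟨Finset.subset_univ S, (Finset.mem_filter.mp hS).2⟩
      have := Finset.card_le_card hss
      rwa [Finset.card_powersetCard, Finset.card_univ, Fintype.card_fin] at this
    calc (F.filter (fun S => S.card = k)).card • g k
        ≤ (n.choose k) • g k := smul_le_smul_of_nonneg_right (by exact_mod_cast h2) zero_le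
      _ = ((n.choose k : ℕ) : ℝ≥0∞) * g k := by rw [nsmul_eq_mul]
      _ = _ := by rw [hg]; ring
  · rw [if_neg hcond]
    have : F.filter (fun S => S.card = k) = ∅ := by
      rw [Finset.filter_eq_empty_iff]
      intro S hS h
      apply hcond
      rw [← h]
      exact (Finset.mem_filter.mp hS).2
    rw [this, Finset.sum_empty]

end AuxLemmas

set_option maxHeartbeats 2000000 in
/-- There exists `ε₀ > 0` such that for every `ε ∈ (0, ε₀)` and every `C > 0` with
`1/C + 2ε ln(1/ε) < (1/2) ln(1/(1-p))`, for every sequence `t(k) < ε k²` (for large `k`),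
a.a.s. `G(n,p)` contains no vertex subset of size `k ≥ C ln n` inducing exactly `t(k)` edges. -/
theorem no_large_induced_subgraph_with_t_edges
    (p : ℝ) (hp₀ : 0 < p) (hp₁ : p < 1) :
    ∃ ε₀ : ℝ, 0 < ε₀ ∧
      ∀ ε : ℝ, 0 < ε → ε < ε₀ →
        ∀ C : ℝ, 0 < C →
          1 / C + 2 * ε * Real.log (1 / ε) < (1 / 2) * Real.log (1 / (1 - p)) →
          ∀ t : ℕ → ℕ,
            (∀ᶠ k in Filter.atTop, (t k : ℝ) < ε * (k : ℝ) ^ 2) →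
            Filter.Tendsto
              (fun n : ℕ =>
                erdosRenyi n hp₀.le hp₁.le
                  {x | ∀ S : Finset (Fin n), C * Real.log n ≤ (S.card : ℝ) →
                        inducedEdgeCount (graphOf x) S ≠ t S.card})
              Filter.atTop (nhds 1) := by
  classical
  set L := Real.log (1 / (1 - p)) with hLdef
  have h1p : (0:ℝ) < 1 - p := by linarith
  have hL0 : 0 < L := by
    rw [hLdef]; apply Real.log_pos; rw [lt_div_iff₀ h1p]; linarith
  clear_value L
  refine ⟨min (1/4) (Real.exp (-(2 + L))), by positivity, ?_⟩
  intro ε hε0 hεlt C hC hcond t htev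
  have hε1 : ε ≤ 1/4 := (lt_of_lt_of_le hεlt (min_le_left _ _)).le
  have hεL : 2 + L ≤ Real.log (1/ε) := by
    have h2 : ε < Real.exp (-(2+L)) := lt_of_lt_of_le hεlt (min_le_right _ _)
    have h3 : Real.log ε < -(2+L) := by
      calc Real.log ε < Real.log (Real.exp (-(2+L))) := Real.log_lt_log hε0 h2
        _ = -(2+L) := Real.log_exp _
    rw [one_div, Real.log_inv]; linarith
  set δ : ℝ := L/2 - (1/C + 2*ε*Real.log (1/ε)) with hδdef
  have hδ0 : 0 < δ := by rw [hδdef]; linarith [hcond]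
  clear_value δ
  obtain ⟨k₁, hk₁⟩ := Filter.eventually_atTop.mp htev
  -- the eventual bound on the bad event
  have hmain : ∀ᶠ n : ℕ in Filter.atTop,
      erdosRenyi n hp₀.le hp₁.le {x | ∃ S : Finset (Fin n),
        C * Real.log n ≤ (S.card:ℝ) ∧ inducedEdgeCount (graphOf x) S = t S.card}
      ≤ ENNReal.ofReal (1/(n:ℝ)) := by
    have hlog : Filter.Tendsto (fun n : ℕ => Real.log n) Filter.atTop Filter.atTop :=
      Real.tendsto_log_atTop.comp tendsto_natCast_atTop_atTop
    set M : ℝ := max (6/(δ*C^2)) ((max 2 (max (k₁:ℝ) (L/δ)) + 1)/C) with hMdef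
    filter_upwards [hlog.eventually_ge_atTop M, Filter.eventually_ge_atTop 2] with n hlogM hn2
    have hn2R : (2:ℝ) ≤ (n:ℝ) := by exact_mod_cast hn2
    have hn0 : (0:ℝ) < n := by linarith
    have hM0 : (0:ℝ) < (max 2 (max (k₁:ℝ) (L/δ)) + 1)/C := by
      apply div_pos _ hC
      have : (2:ℝ) ≤ max 2 (max (k₁:ℝ) (L/δ)) := le_max_left _ _
      linarith
    have hlogn0 : 0 < Real.log n :=
      lt_of_lt_of_le (lt_of_lt_of_le hM0 (le_max_right _ _)) hlogM
    have hCM : max 2 (max (k₁:ℝ) (L/δ)) + 1 ≤ C * Real.log n := by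
      have h := le_trans (le_max_right (6/(δ*C^2)) _) hlogM
      rw [div_le_iff₀ hC] at h
      linarith [h]
    have hkcond : ∀ k : ℕ, C * Real.log n ≤ (k:ℝ) → 2 ≤ k ∧ k₁ ≤ k ∧ L ≤ δ*(k:ℝ) := by
      intro k hk
      have hbig : max 2 (max (k₁:ℝ) (L/δ)) + 1 ≤ (k:ℝ) := le_trans hCM hk
      have hm2 : (2:ℝ) ≤ max 2 (max (k₁:ℝ) (L/δ)) := le_max_left _ _
      have hmk : (k₁:ℝ) ≤ max 2 (max (k₁:ℝ) (L/δ)) :=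
        le_trans (le_max_left _ _) (le_max_right _ _)
      have hmL : L/δ ≤ max 2 (max (k₁:ℝ) (L/δ)) :=
        le_trans (le_max_right _ _) (le_max_right _ _)
      refine ⟨by exact_mod_cast (by linarith : (2:ℝ) ≤ (k:ℝ)),
        by exact_mod_cast (by linarith : (k₁:ℝ) ≤ (k:ℝ)), ?_⟩
      have hLk : L/δ ≤ (k:ℝ) := by linarith
      rw [div_le_iff₀ hδ0] at hLk
      linarith
    -- now the chain of estimates
    have hy0 : 0 ≤ C * Real.log n := by positivity
    refine le_trans (measure_bad_le hp₀.le hp₁.le n C t) ?_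
    have hterm : ∀ k ∈ Finset.range (n+1),
        (if C * Real.log n ≤ (k:ℝ) then
          ((n.choose k : ℕ) : ℝ≥0∞) * (((k.choose 2).choose (t k) : ℕ) : ℝ≥0∞)
            * (ENNReal.ofReal (1-p))^(k.choose 2 - t k)
        else 0)
        ≤ ENNReal.ofReal (Real.exp (-(δ/2) * (C * Real.log n)^2)) := by
      intro k hk
      by_cases hc : C * Real.log n ≤ (k:ℝ)
      · obtain ⟨h2k, hk₁', hkδ⟩ := hkcond k hc
        have hkn : k ≤ n := Nat.lt_succ_iff.mp (Finset.mem_range.mp hk)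
        have ht' : (t k : ℝ) < ε * (k:ℝ)^2 := hk₁ k hk₁'
        have hkey := key_real p L ε C δ hp₀ hp₁ hLdef hε0 hε1 hεL hC hδdef hδ0
          n k (t k) h2k hkn hc (by linarith [hkδ]) ht'
        have hconv : ((n.choose k : ℕ) : ℝ≥0∞) * (((k.choose 2).choose (t k) : ℕ) : ℝ≥0∞)
              * (ENNReal.ofReal (1-p))^(k.choose 2 - t k)
            = ENNReal.ofReal ((n.choose k : ℝ) * (((k.choose 2).choose (t k) : ℕ) : ℝ)
              * (1-p)^(k.choose 2 - t k)) := by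
          rw [ENNReal.ofReal_mul (by positivity), ENNReal.ofReal_mul (by positivity),
            ENNReal.ofReal_pow h1p.le, ENNReal.ofReal_natCast, ENNReal.ofReal_natCast]
        rw [if_pos hc, hconv]
        apply ENNReal.ofReal_le_ofReal
        refine hkey.trans (Real.exp_le_exp.mpr ?_)
        have hsq : (C * Real.log n)^2 ≤ (k:ℝ)^2 := by nlinarith [hc, hy0]
        nlinarith [hsq, hδ0.le]
      · rw [if_neg hc]
        exact zero_le
    refine le_trans (Finset.sum_le_sum hterm) ?_
    rw [Finset.sum_const, Finset.card_range, nsmul_eq_mul]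
    have hconv2 : ((n+1 : ℕ) : ℝ≥0∞) * ENNReal.ofReal (Real.exp (-(δ/2) * (C * Real.log n)^2))
        = ENNReal.ofReal (((n:ℝ)+1) * Real.exp (-(δ/2) * (C * Real.log n)^2)) := by
      rw [ENNReal.ofReal_mul (by positivity)]
      congr 1
      rw [show ((n:ℝ)+1) = ((n+1:ℕ):ℝ) by push_cast; ring, ENNReal.ofReal_natCast]
    rw [hconv2]
    apply ENNReal.ofReal_le_ofReal
    -- real inequality (n+1) e^{-b} ≤ 1/n
    rw [le_div_iff₀ hn0]
    have hz6 : 6/(δ*C^2) ≤ Real.log n := le_trans (le_max_left _ _) hlogM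
    have hδC : (0:ℝ) < δ*C^2 := by positivity
    rw [div_le_iff₀ hδC] at hz6
    have h3log : 3 * Real.log n ≤ (δ/2) * (C * Real.log n)^2 := by
      have hh := mul_le_mul_of_nonneg_right hz6 hlogn0.le
      nlinarith [hh]
    have hb : (n:ℝ)*((n:ℝ)+1) ≤ Real.exp ((δ/2)*(C * Real.log n)^2) := by
      calc (n:ℝ)*((n:ℝ)+1) ≤ (n:ℝ)^3 := by
            nlinarith [mul_nonneg (by linarith : (0:ℝ) ≤ (n:ℝ)-2) hn0.le]
        _ = Real.exp (3 * Real.log n) := by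
            rw [show (3:ℝ) * Real.log n = Real.log ((n:ℝ)^3) by
              rw [Real.log_pow]; push_cast; ring, Real.exp_log (by positivity)]
        _ ≤ Real.exp ((δ/2)*(C * Real.log n)^2) := Real.exp_le_exp.mpr h3log
    calc ((n:ℝ)+1) * Real.exp (-(δ/2) * (C * Real.log n)^2) * (n:ℝ)
        = ((n:ℝ)*((n:ℝ)+1)) * Real.exp (-(δ/2) * (C * Real.log n)^2) := by ring
      _ ≤ Real.exp ((δ/2)*(C * Real.log n)^2) * Real.exp (-(δ/2) * (C * Real.log n)^2) :=
          mul_le_mul_of_nonneg_right hb (Real.exp_nonneg _)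
      _ = 1 := by
          rw [← Real.exp_add, show (δ/2)*(C * Real.log n)^2 + -(δ/2) * (C * Real.log n)^2 = 0 by ring, Real.exp_zero]
  -- convergence of the bad probability to zero
  have hbad0 : Filter.Tendsto (fun n : ℕ =>
      erdosRenyi n hp₀.le hp₁.le {x | ∃ S : Finset (Fin n),
        C * Real.log n ≤ (S.card:ℝ) ∧ inducedEdgeCount (graphOf x) S = t S.card})
      Filter.atTop (nhds 0) := by
    have hub : Filter.Tendsto (fun n : ℕ => ENNReal.ofReal (1/(n:ℝ))) Filter.atTop (nhds 0) := by
      have := ENNReal.tendsto_ofReal (tendsto_one_div_atTop_nhds_zero_nat)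
      simpa using this
    refine tendsto_of_tendsto_of_tendsto_of_le_of_le' tendsto_const_nhds hub
      (Filter.Eventually.of_forall fun n => zero_le) hmain
  -- pass to the complement
  have hprob : ∀ n : ℕ, IsProbabilityMeasure (erdosRenyi n hp₀.le hp₁.le) := by
    intro n; unfold erdosRenyi; infer_instance
  have heq : ∀ n : ℕ,
      erdosRenyi n hp₀.le hp₁.le
        {x | ∀ S : Finset (Fin n), C * Real.log n ≤ (S.card : ℝ) →
              inducedEdgeCount (graphOf x) S ≠ t S.card}
      = 1 - erdosRenyi n hp₀.le hp₁.le {x | ∃ S : Finset (Fin n),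
          C * Real.log n ≤ (S.card:ℝ) ∧ inducedEdgeCount (graphOf x) S = t S.card} := by
    intro n
    haveI := hprob n
    have hcompl : {x : Sym2 (Fin n) → Bool | ∀ S : Finset (Fin n),
          C * Real.log n ≤ (S.card : ℝ) → inducedEdgeCount (graphOf x) S ≠ t S.card}
        = {x : Sym2 (Fin n) → Bool | ∃ S : Finset (Fin n),
            C * Real.log n ≤ (S.card:ℝ) ∧ inducedEdgeCount (graphOf x) S = t S.card}ᶜ := by
      ext x
      simp only [Set.mem_setOf_eq, Set.mem_compl_iff, not_exists, not_and]
    rw [hcompl, prob_compl_eq_one_sub (Set.Finite.measurableSet (Set.toFinite _))]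
  rw [show (fun n : ℕ => erdosRenyi n hp₀.le hp₁.le
      {x | ∀ S : Finset (Fin n), C * Real.log n ≤ (S.card : ℝ) →
            inducedEdgeCount (graphOf x) S ≠ t S.card})
    = fun n : ℕ => 1 - erdosRenyi n hp₀.le hp₁.le {x | ∃ S : Finset (Fin n),
        C * Real.log n ≤ (S.card:ℝ) ∧ inducedEdgeCount (graphOf x) S = t S.card}
    from funext heq]
  have hcont : Continuous (fun z : ℝ≥0∞ => 1 - z) :=
    ENNReal.continuous_sub_left ENNReal.one_ne_top
  have := (hcont.tendsto 0).comp hbad0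
  simpa [Function.comp_def] using this
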